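/- The function F(a) = sin²(a)·(1/3 + 1/a²) is strictly decreasing on the interval (0, π), and lim_{a→0⁺} F(a) = 1. -/

import Mathlib

open Real Set Filter Topology

private lemma hasDerivAt_h (x : ℝ) :
    HasDerivAt (fun x : ℝ => Real.sin x - x * Real.cos x + x^2 * Real.sin x / 3)
      (x * Real.sin x + (2*x*Real.sin x + x^2*Real.cos x)/3) x := by
  have h1 : HasDerivAt (fun x : ℝ => Real.sin x - x * Real.cos x + x^2 * Real.sin x / 3)
      (Real.cos x - (1 * Real.cos x + x * (-Real.sin x)) +
        (2 * x ^ 1 * Real.sin x + x^2 * Real.cos x) / 3) x := by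
    exact (((Real.hasDerivAt_sin x).sub ((hasDerivAt_id x).mul (Real.hasDerivAt_cos x))).add
      (((hasDerivAt_pow 2 x).mul (Real.hasDerivAt_sin x)).div_const 3))
  convert h1 using 1; push_cast; ring

private lemma hasDerivAt_g (x : ℝ) :
    HasDerivAt (fun x : ℝ => Real.sin x - x * Real.cos x - x^3 * Real.cos x / 3)
      (x * (Real.sin x - x * Real.cos x + x^2 * Real.sin x / 3)) x := by
  have h1 : HasDerivAt (fun x : ℝ => Real.sin x - x * Real.cos x - x^3 * Real.cos x / 3)
      (Real.cos x - (1 * Real.cos x + x * (-Real.sin x)) -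
        (3 * x ^ 2 * Real.cos x + x^3 * (-Real.sin x)) / 3) x := by
    exact (((Real.hasDerivAt_sin x).sub ((hasDerivAt_id x).mul (Real.hasDerivAt_cos x))).sub
      (((hasDerivAt_pow 3 x).mul (Real.hasDerivAt_cos x)).div_const 3))
  convert h1 using 1; push_cast; ring

private lemma h_pos : ∀ x ∈ Set.Ioc (0:ℝ) (π/2),
    0 < Real.sin x - x * Real.cos x + x^2 * Real.sin x / 3 := by
  have hm : StrictMonoOn (fun x : ℝ => Real.sin x - x * Real.cos x + x^2 * Real.sin x / 3)
      (Set.Icc 0 (π/2)) := by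
    apply strictMonoOn_of_deriv_pos (convex_Icc _ _)
    · fun_prop
    · intro x hx
      rw [interior_Icc] at hx
      rw [(hasDerivAt_h x).deriv]
      have hs : 0 < Real.sin x := Real.sin_pos_of_pos_of_lt_pi hx.1
        (lt_of_lt_of_le hx.2 (by linarith [Real.pi_pos]))
      have hc : 0 < Real.cos x := Real.cos_pos_of_mem_Ioo ⟨by linarith [Real.pi_pos, hx.1], hx.2⟩
      have := hx.1
      positivity
  intro x hx
  have := hm (Set.left_mem_Icc.2 (by positivity)) ⟨hx.1.le, hx.2⟩ hx.1
  simpa using this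

private lemma g_pos : ∀ x ∈ Set.Ioo (0:ℝ) π,
    Real.cos x * (x + x^3/3) < Real.sin x := by
  intro x hx
  rcases le_or_gt x (π/2) with hle | hgt
  · have hm : StrictMonoOn (fun x : ℝ => Real.sin x - x * Real.cos x - x^3 * Real.cos x / 3)
        (Set.Icc 0 (π/2)) := by
      apply strictMonoOn_of_deriv_pos (convex_Icc _ _)
      · fun_prop
      · intro y hy
        rw [interior_Icc] at hy
        rw [(hasDerivAt_g y).deriv]
        exact mul_pos hy.1 (h_pos y ⟨hy.1, hy.2.le⟩)
    have := hm (Set.left_mem_Icc.2 (by positivity)) ⟨hx.1.le, hle⟩ hx.1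
    simp only [Real.sin_zero, Real.cos_zero] at this
    nlinarith
  · have hs : 0 < Real.sin x := Real.sin_pos_of_pos_of_lt_pi hx.1 hx.2
    have hc : Real.cos x ≤ 0 := Real.cos_nonpos_of_pi_div_two_le_of_le hgt.le
      (by have := hx.2; linarith [Real.pi_pos])
    have hxp : 0 < x + x^3/3 := by have := hx.1; positivity
    nlinarith

theorem strictAntiOn_sin_sq_mul_third_add_inv_sq :
    StrictAntiOn (fun a : ℝ => (Real.sin a)^2 * (1/3 + 1/a^2)) (Set.Ioo 0 π) ∧
    Filter.Tendsto (fun a : ℝ => (Real.sin a)^2 * (1/3 + 1/a^2)) (𝓝[>] 0) (𝓝 1) := by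
  constructor
  · apply strictAntiOn_of_deriv_neg (convex_Ioo _ _)
    · apply ContinuousOn.mul (by fun_prop)
      apply ContinuousOn.add continuousOn_const
      apply ContinuousOn.div continuousOn_const (by fun_prop)
      intro x hx
      exact pow_ne_zero _ (ne_of_gt hx.1)
    · intro x hx
      rw [interior_Ioo] at hx
      have hx0 : x ≠ 0 := ne_of_gt hx.1
      have hd : HasDerivAt (fun a : ℝ => (Real.sin a)^2 * (1/3 + 1/a^2))
          ((2 * Real.sin x ^ 1 * Real.cos x) * (1/3 + 1/x^2) +
            Real.sin x ^ 2 * (-(2 * x ^ 1) / (x^2)^2)) x := by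
        have h1 : HasDerivAt (fun a : ℝ => Real.sin a ^ 2) (2 * Real.sin x ^ 1 * Real.cos x) x := by
          simpa using (Real.hasDerivAt_sin x).fun_pow 2
        have h2 : HasDerivAt (fun a : ℝ => 1/3 + 1/a^2) (-(2 * x ^ 1) / (x^2)^2) x := by
          simp only [one_div]
          simpa using (hasDerivAt_const x (1/3:ℝ)).fun_add
            ((hasDerivAt_pow 2 x).fun_inv (pow_ne_zero 2 hx0))
        exact h1.mul h2
      rw [hd.deriv]
      have hs : 0 < Real.sin x := Real.sin_pos_of_pos_of_lt_pi hx.1 hx.2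
      have key := g_pos x hx
      have heq : (2 * Real.sin x ^ 1 * Real.cos x) * (1/3 + 1/x^2) +
          Real.sin x ^ 2 * (-(2 * x ^ 1) / (x^2)^2) =
          (2 * Real.sin x / x^3) * (Real.cos x * (x + x^3/3) - Real.sin x) := by
        field_simp
        ring
      rw [heq]
      apply mul_neg_of_pos_of_neg
      · have := hx.1; positivity
      · linarith
  · have hsin : Filter.Tendsto (fun a : ℝ => Real.sin a / a) (𝓝[>] 0) (𝓝 1) := by
      have := Real.hasDerivAt_sin 0
      rw [hasDerivAt_iff_tendsto_slope] at this
      simp only [Real.cos_zero] at this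
      have h2 : Filter.Tendsto (slope Real.sin 0) (𝓝[>] 0) (𝓝 1) :=
        this.mono_left (nhdsWithin_mono 0 (fun x hx => ne_of_gt hx))
      refine h2.congr (fun x => ?_)
      simp [slope_def_field, div_eq_div_iff]
    have h1 : Filter.Tendsto (fun a : ℝ => (Real.sin a)^2 / 3 + (Real.sin a / a)^2)
        (𝓝[>] 0) (𝓝 1) := by
      have ha : Filter.Tendsto (fun a : ℝ => (Real.sin a)^2 / 3) (𝓝[>] 0) (𝓝 0) := by
        have : Filter.Tendsto (fun a : ℝ => (Real.sin a)^2 / 3) (𝓝 0) (𝓝 0) := by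
          have : Continuous (fun a : ℝ => (Real.sin a)^2 / 3) := by fun_prop
          simpa using this.tendsto 0
        exact this.mono_left nhdsWithin_le_nhds
      have hb : Filter.Tendsto (fun a : ℝ => (Real.sin a / a)^2) (𝓝[>] 0) (𝓝 1) := by
        simpa using hsin.pow 2
      simpa using ha.add hb
    refine h1.congr' ?_
    filter_upwards [self_mem_nhdsWithin] with a (ha : 0 < a)
    have ha0 : a ≠ 0 := ne_of_gt ha
    field_simp
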